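/- Let s₁,…,s_m be bucket sizes and let L ≥ max_i sᵢ. Let G₁,…,G_t be any partition of the buckets into consecutive groups each of total size at most L. Then for every i ≤ t, the first i groups formed by the scanning algorithm with bound L together contain at least as many buckets as G₁ ∪ … ∪ G_i; consequently the scanning algorithm with bound L partitions the buckets into at most t groups. -/

import Mathlib

/-- The length of the longest prefix of `s` whose sum is at most `L`. -/
def greedyLen (L : ℕ) (s : List ℕ) : ℕ :=
  ((List.range (s.length + 1)).filter (fun j => (s.take j).sum ≤ L)).foldr max 0

/-- The scanning (greedy) algorithm: repeatedly take as the next group the longest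
prefix of the remaining buckets whose total size is at most `L`. -/
def scanGroups (L : ℕ) : List ℕ → List (List ℕ)
  | [] => []
  | a :: t =>
      (a :: t).take (max 1 (greedyLen L (a :: t))) ::
        scanGroups L ((a :: t).drop (max 1 (greedyLen L (a :: t))))
  termination_by s => s.length
  decreasing_by
    simp only [List.length_drop, List.length_cons]
    omega

lemma le_foldr_max {l : List ℕ} {x : ℕ} (h : x ∈ l) : x ≤ l.foldr max 0 := by
  induction l with
  | nil => simp at h
  | cons a t ih =>
    simp only [List.foldr_cons]
    rcases List.mem_cons.1 h with h | h
    · omega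
    · exact le_trans (ih h) (le_max_right _ _)

lemma foldr_max_le {l : List ℕ} {n : ℕ} (h : ∀ x ∈ l, x ≤ n) : l.foldr max 0 ≤ n := by
  induction l with
  | nil => simp
  | cons a t ih =>
    simp only [List.foldr_cons]
    have := h a (List.mem_cons_self)
    have := ih (fun x hx => h x (List.mem_cons_of_mem _ hx))
    omega

lemma greedyLen_le_length (L : ℕ) (s : List ℕ) : greedyLen L s ≤ s.length := by
  apply foldr_max_le
  intro x hx
  have := List.mem_range.1 (List.mem_filter.1 hx).1
  omega

lemma le_greedyLen (L : ℕ) (s : List ℕ) {j : ℕ} (hj : j ≤ s.length)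
    (hs : (s.take j).sum ≤ L) : j ≤ greedyLen L s := by
  apply le_foldr_max
  apply List.mem_filter.2
  exact ⟨List.mem_range.2 (by omega), by simpa using hs⟩

/-- Drop `d` elements from the front of a partition, keeping group structure. -/
def trimP : ℕ → List (List ℕ) → List (List ℕ)
  | _, [] => []
  | d, g :: P => g.drop d :: trimP (d - g.length) P

lemma trimP_flatten (d : ℕ) (P : List (List ℕ)) :
    (trimP d P).flatten = P.flatten.drop d := by
  induction P generalizing d with
  | nil => simp [trimP]
  | cons g P ih =>
    simp [trimP, ih, List.drop_append]

lemma trimP_sum_le (L : ℕ) {P : List (List ℕ)} (h : ∀ g ∈ P, g.sum ≤ L)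
    (d : ℕ) : ∀ g ∈ trimP d P, g.sum ≤ L := by
  induction P generalizing d with
  | nil => simp [trimP]
  | cons g P ih =>
    intro g' hg'
    rcases List.mem_cons.1 hg' with h' | h'
    · subst h'
      have h1 : (g.take d).sum + (g.drop d).sum = g.sum := by
        rw [← List.sum_append, List.take_append_drop]
      have := h g (List.mem_cons_self)
      omega
    · exact ih (fun g hg => h g (List.mem_cons_of_mem _ hg)) _ g' h'

lemma trimP_take (d : ℕ) (P : List (List ℕ)) (i : ℕ) :
    ((P.take i).map List.length).sum ≤ d + (((trimP d P).take i).map List.length).sum := by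
  induction P generalizing d i with
  | nil => simp [trimP]
  | cons g P ih =>
    cases i with
    | zero => simp
    | succ i =>
      simp only [trimP, List.take_succ_cons, List.map_cons, List.sum_cons,
        List.length_drop]
      have := ih (d - g.length) i
      omega

lemma scan_len_sum (L : ℕ) : ∀ s : List ℕ, ((scanGroups L s).map List.length).sum = s.length
  | [] => by simp [scanGroups]
  | a :: t => by
    rw [scanGroups]
    have h := scan_len_sum L ((a :: t).drop (max 1 (greedyLen L (a :: t))))
    simp only [List.map_cons, List.sum_cons, h, List.length_take, List.length_drop,
      List.length_cons]
    omega
  termination_by s => s.length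
  decreasing_by
    simp only [List.length_drop, List.length_cons]
    omega

lemma scan_nonempty (L : ℕ) : ∀ s : List ℕ, ∀ g ∈ scanGroups L s, 1 ≤ g.length
  | [] => by simp [scanGroups]
  | a :: t => by
    rw [scanGroups]
    intro g hg
    rcases List.mem_cons.1 hg with h | h
    · subst h
      simp only [List.length_take, List.length_cons]
      omega
    · exact scan_nonempty L ((a :: t).drop (max 1 (greedyLen L (a :: t)))) g h
  termination_by s => s.length
  decreasing_by
    simp only [List.length_drop, List.length_cons]
    omega

lemma dominance_aux (L : ℕ) (n : ℕ) : ∀ s : List ℕ, s.length ≤ n → (∀ x ∈ s, x ≤ L) →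
    ∀ P : List (List ℕ), P.flatten = s → (∀ g ∈ P, g.sum ≤ L) → ∀ i : ℕ,
    ((P.take i).map List.length).sum ≤ (((scanGroups L s).take i).map List.length).sum := by
  induction n with
  | zero =>
    intro s hs _ P hP _ i
    have : s = [] := List.eq_nil_of_length_eq_zero (by omega)
    subst this
    have h0 : (P.map List.length).sum = 0 := by
      rw [← List.length_flatten, hP]; simp
    have h1 : ((P.take i).map List.length).sum + ((P.drop i).map List.length).sum
        = (P.map List.length).sum := by
      rw [← List.sum_append, ← List.map_append, List.take_append_drop]
    simp only [scanGroups, List.take_nil, List.map_nil, List.sum_nil]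
    omega
  | succ n ih =>
    intro s hs hmax P hP hbd i
    cases i with
    | zero => simp
    | succ i =>
      cases P with
      | nil => simp
      | cons G P' =>
        cases s with
        | nil =>
          have h0 : ((G :: P').map List.length).sum = 0 := by
            rw [← List.length_flatten, hP]; simp
          have h1 : (((G :: P').take (i+1)).map List.length).sum
              + (((G :: P').drop (i+1)).map List.length).sum
              = ((G :: P').map List.length).sum := by
            rw [← List.sum_append, ← List.map_append, List.take_append_drop]
          simp only [scanGroups, List.take_nil, List.map_nil, List.sum_nil]
          omega
        | cons a t =>
          set k := max 1 (greedyLen L (a :: t)) with hk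
          have hk1 : 1 ≤ k := le_max_left _ _
          have hklen : k ≤ (a :: t).length := by
            have := greedyLen_le_length L (a :: t)
            simp only [List.length_cons] at *
            omega
          have hGpre : (a :: t).take G.length = G := by
            rw [← hP]
            simp [List.take_append]
          have hGk : G.length ≤ k := by
            rcases Nat.eq_zero_or_pos G.length with h | h
            · omega
            · have hGlen : G.length ≤ (a :: t).length := by
                rw [← hP]; simp
              have := le_greedyLen L (a :: t) hGlen
                (by rw [hGpre]; exact hbd G (List.mem_cons_self))
              omega
          set d := k - G.length with hd
          have hdrop : (a :: t).drop k = P'.flatten.drop d := by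
            rw [← hP, List.flatten_cons, List.drop_append]
            have : G.drop k = [] := List.drop_eq_nil_of_le (by omega)
            rw [this, List.nil_append]
          have hlen' : ((a :: t).drop k).length ≤ n := by
            simp only [List.length_drop, List.length_cons] at *
            omega
          have hrec := ih ((a :: t).drop k) hlen'
            (fun x hx => hmax x (List.mem_of_mem_drop hx))
            (trimP d P') (by rw [trimP_flatten, hdrop])
            (trimP_sum_le L (fun g hg => hbd g (List.mem_cons_of_mem _ hg)) d) i
          have htrim := trimP_take d P' i
          have hmin : k ⊓ (t.length + 1) = k := by
            simp only [List.length_cons] at hklen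
            omega
          rw [scanGroups]
          simp only [List.take_succ_cons, List.map_cons, List.sum_cons, List.length_take,
            List.length_cons, ← hk, hmin]
          omega

lemma dominance (L : ℕ) (s : List ℕ) (hmax : ∀ x ∈ s, x ≤ L)
    (P : List (List ℕ)) (hP : P.flatten = s) (hbd : ∀ g ∈ P, g.sum ≤ L) (i : ℕ) :
    ((P.take i).map List.length).sum ≤ (((scanGroups L s).take i).map List.length).sum :=
  dominance_aux L s.length s le_rfl hmax P hP hbd i

/-- Let `L ≥ max_i sᵢ` and let `P = G₁,…,G_t` be any partition of the buckets `s` into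
consecutive (nonempty) groups, each of total size at most `L`.  Then for every `i ≤ t`
the first `i` groups formed by the scanning algorithm with bound `L` together contain at
least as many buckets as `G₁ ∪ … ∪ G_i`; consequently the scanning algorithm with bound
`L` partitions the buckets into at most `t` groups. -/
theorem scanning_dominates_any_partition
    (s : List ℕ) (L : ℕ) (hmax : ∀ x ∈ s, x ≤ L)
    (P : List (List ℕ)) (hP : P.flatten = s)
    (hne : ∀ g ∈ P, g ≠ []) (hbound : ∀ g ∈ P, g.sum ≤ L) :
    (∀ i ≤ P.length,
        ((P.take i).map List.length).sum ≤
          (((scanGroups L s).take i).map List.length).sum) ∧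
      (scanGroups L s).length ≤ P.length := by
  refine ⟨fun i _ => dominance L s hmax P hP hbound i, ?_⟩
  by_contra hcon
  push_neg at hcon
  set S := scanGroups L s with hS
  set t := P.length with ht
  have hdom := dominance L s hmax P hP hbound t
  rw [← hS] at hdom
  have hPfull : ((P.take t).map List.length).sum = s.length := by
    rw [List.take_length, ← List.length_flatten, hP]
  have hsplit : ((S.take t).map List.length).sum + ((S.drop t).map List.length).sum
      = (S.map List.length).sum := by
    rw [← List.sum_append, ← List.map_append, List.take_append_drop]
  have hstot : (S.map List.length).sum = s.length := scan_len_sum L s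
  have hne' : S.drop t ≠ [] := by
    intro h
    have := congrArg List.length h
    simp only [List.length_drop, List.length_nil] at this
    omega
  obtain ⟨g, hg⟩ := List.exists_mem_of_ne_nil _ hne'
  have hg1 : 1 ≤ g.length := scan_nonempty L s g (List.mem_of_mem_drop hg)
  have hg2 : g.length ≤ ((S.drop t).map List.length).sum :=
    List.single_le_sum (fun x _ => Nat.zero_le x) _ (List.mem_map_of_mem hg)
  omega
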